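/- For every natural number n, the normal ordering (X + s D_q)^n = Σ_{m=0}^{n} Σ_{ℓ=0}^{min(m,n-m)} [n-2ℓ choose m-ℓ]_q · W(n,ℓ) · X^{m-ℓ} s^{n-m} D_q^{n-m-ℓ} holds as an identity of operators on the polynomial ring, where W(n,ℓ) = (1-q)^{-ℓ} · Σ_{i=0}^{ℓ} C(n,i) · (-1)^{ℓ-i} · q^{C(ℓ-i,2)} · λ_q(n-2i, ℓ-i), with C(n,i) the ordinary binomial coefficient and C(ℓ-i,2) = (ℓ-i)(ℓ-i-1)/2. -/

import Mathlib

noncomputable section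

/-- The field `ℚ(q,s)` of rational functions in two indeterminates. -/
abbrev F : Type := FractionRing (MvPolynomial (Fin 2) ℚ)

/-- The indeterminate `q`. -/
def q : F := algebraMap (MvPolynomial (Fin 2) ℚ) F (MvPolynomial.X 0)

/-- The indeterminate `s`. -/
def s : F := algebraMap (MvPolynomial (Fin 2) ℚ) F (MvPolynomial.X 1)

/-- The q-integer `[n]_q = 1 + q + ⋯ + q^{n-1}`. -/
def qInt (n : ℕ) : F := ∑ i ∈ Finset.range n, q ^ i

/-- The q-factorial `[n]_q! = ∏_{k=1}^n [k]_q`. -/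
def qFact (n : ℕ) : F := ∏ k ∈ Finset.range n, qInt (k + 1)

/-- The q-binomial coefficient `[n choose k]_q = [n]_q!/([k]_q! [n-k]_q!)`. -/
def qBinom (n k : ℕ) : F := qFact n / (qFact k * qFact (n - k))

/-- The operator `X` of multiplication by `x` on `F[x]`. -/
def Xop : Module.End F (Polynomial F) := LinearMap.mulLeft F Polynomial.X

/-- Division by `x` (discarding the constant term), as a linear map. -/
def divXL : Polynomial F →ₗ[F] Polynomial F where
  toFun := Polynomial.divX
  map_add' p r := Polynomial.divX_add
  map_smul' a p := by
    ext n
    simp [Polynomial.coeff_divX, Polynomial.coeff_smul]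

/-- The q-derivative `D_q f(x) = (f(qx) - f(x))/((q-1)x)`; it is the F-linear
operator on `F[x]` determined by `D_q x^n = [n]_q x^{n-1}`. -/
def Dq : Module.End F (Polynomial F) :=
  (q - 1)⁻¹ •
    (divXL ∘ₗ
      ((Polynomial.aeval (Polynomial.C q * Polynomial.X)).toLinearMap - LinearMap.id))

/-- The polynomials `h_n(x,t) = Σ_j q^{j²} t^j [n]_q!/((1+q)⋯(1+q^j)·[j]_q!·[n-2j]_q!)
x^{n-2j}` (the parameter `t` will be specialized to `s` or `q²s`). -/
def h (t : F) (n : ℕ) : Polynomial F :=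
  ∑ j ∈ Finset.range (n / 2 + 1),
    Polynomial.C (q ^ (j ^ 2) * t ^ j * qFact n /
        ((∏ i ∈ Finset.range j, (1 + q ^ (i + 1))) * qFact j * qFact (n - 2 * j))) *
      Polynomial.X ^ (n - 2 * j)


/-- The q-Lucas coefficient `λ_q(n,k) = ([n]_q/[n-k]_q)·[n-k choose k]_q` for `n ≥ 1`,
with `λ_q(0,0) = 1`. -/
def lam (n k : ℕ) : F :=
  if n = 0 ∧ k = 0 then 1 else qInt n / qInt (n - k) * qBinom (n - k) k

/-- The q-Weyl coefficient
`W(n,ℓ) = (1-q)^{-ℓ} Σ_{i=0}^{ℓ} C(n,i) (-1)^{ℓ-i} q^{C(ℓ-i,2)} λ_q(n-2i, ℓ-i)`. -/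
def W (n ℓ : ℕ) : F :=
  (1 - q)⁻¹ ^ ℓ *
    ∑ i ∈ Finset.range (ℓ + 1),
      (n.choose i : F) * (-1) ^ (ℓ - i) * q ^ (ℓ - i).choose 2 * lam (n - 2 * i) (ℓ - i)

section Basics

lemma fmap_inj : Function.Injective (algebraMap (MvPolynomial (Fin 2) ℚ) F) :=
  IsFractionRing.injective _ _

lemma q_pow_ne_one {k : ℕ} (hk : k ≠ 0) : q ^ k ≠ 1 := by
  intro h
  rw [q, ← map_pow, ← map_one (algebraMap (MvPolynomial (Fin 2) ℚ) F)] at h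
  have h2 := congrArg (MvPolynomial.eval (fun _ => (2:ℚ))) (fmap_inj h)
  simp at h2
  have : (2:ℚ) ^ k ≥ 2 ^ 1 := by
    apply pow_le_pow_right₀ (by norm_num) (by omega)
  rw [h2] at this; norm_num at this

lemma q_sub_one_ne : q - 1 ≠ 0 := by
  intro h
  have : q ^ 1 = 1 := by rw [pow_one]; linear_combination h
  exact q_pow_ne_one one_ne_zero this

lemma one_sub_q_ne : (1 : F) - q ≠ 0 := by
  intro h; apply q_sub_one_ne; linear_combination -h

lemma qInt_mul : ∀ k : ℕ, (q - 1) * qInt k = q ^ k - 1 := by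
  intro k
  rw [qInt, mul_comm, geom_sum_mul]

lemma qInt_eq (k : ℕ) : qInt k = (q ^ k - 1) * (q - 1)⁻¹ := by
  field_simp [q_sub_one_ne]
  linear_combination qInt_mul k

lemma qInt_ne {k : ℕ} (hk : k ≠ 0) : qInt k ≠ 0 := by
  intro h
  have := qInt_mul k
  rw [h, mul_zero] at this
  exact q_pow_ne_one hk (by linear_combination -this)

lemma qFact_succ (k : ℕ) : qFact (k+1) = qFact k * qInt (k+1) :=
  Finset.prod_range_succ _ _

lemma qFact_ne (k : ℕ) : qFact k ≠ 0 := by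
  induction k with
  | zero => simp [qFact]
  | succ n ih => rw [qFact_succ]; exact mul_ne_zero ih (qInt_ne n.succ_ne_zero)

lemma qInt_add (a b : ℕ) : qInt (a + b) = qInt a + q ^ a * qInt b := by
  apply mul_left_cancel₀ q_sub_one_ne
  rw [mul_add, qInt_mul, qInt_mul, pow_add]
  linear_combination -q ^ a * qInt_mul b

lemma one_sub_q_mul_qInt (k : ℕ) : (1 - q) * qInt k = 1 - q ^ k := by
  linear_combination -qInt_mul k

end Basics
set_option maxHeartbeats 4000000

section QBinomLam

lemma qInt_one : qInt 1 = 1 := by simp [qInt]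

lemma q_pow_sub_one_ne {k : ℕ} (hk : k ≠ 0) : q ^ k - 1 ≠ 0 := by
  intro h; exact q_pow_ne_one hk (by linear_combination h)

lemma qFact_zero : qFact 0 = 1 := by simp [qFact]

lemma qFact_one : qFact 1 = 1 := by
  rw [show (1:ℕ) = 0 + 1 from rfl, qFact_succ, qFact_zero, qInt_one, one_mul]

lemma qBinom_pascal (a b : ℕ) :
    qBinom (a+b+2) (a+1) = qBinom (a+b+1) a + q^(a+1) * qBinom (a+b+1) (a+1) := by
  have key : qInt (a+b+2) = qInt (a+1) + q^(a+1) * qInt (b+1) := by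
    have := qInt_add (a+1) (b+1)
    rw [show a+1+(b+1) = a+b+2 from by omega] at this
    exact this
  have h1 : qInt (a+1) ≠ 0 := qInt_ne (by omega)
  have h2 : qInt (b+1) ≠ 0 := qInt_ne (by omega)
  rw [qBinom, qBinom, qBinom,
    show a+b+2-(a+1) = b+1 from by omega,
    show a+b+1-a = b+1 from by omega,
    show a+b+1-(a+1) = b from by omega,
    show a+b+2 = (a+b+1)+1 from by omega, qFact_succ (a+b+1),
    qFact_succ a, qFact_succ b, key]
  field_simp [qFact_ne, h1, h2]

lemma qBinom_absorb (a b : ℕ) :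
    qInt (a+1) * qBinom (a+b+1) (a+1) = qInt (a+b+1) * qBinom (a+b) a := by
  have h1 : qInt (a+1) ≠ 0 := qInt_ne (by omega)
  rw [qBinom, qBinom,
    show a+b+1-(a+1) = b from by omega,
    show a+b-a = b from by omega,
    show a+b+1 = (a+b)+1 from by omega, qFact_succ (a+b), qFact_succ a]
  field_simp [qFact_ne, h1]

lemma lam_zero' (m : ℕ) : lam m 0 = 1 := by
  rcases m with _ | k
  · simp [lam]
  · rw [lam, if_neg (by simp), Nat.sub_zero, qBinom, Nat.sub_zero, qFact_zero]
    rw [div_self (qInt_ne (Nat.succ_ne_zero k))]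
    rw [one_mul, one_mul, div_self (qFact_ne _)]

lemma lam_eq (r a : ℕ) :
    lam (2*(r+1)+a) (r+1) = qInt (2*(r+1)+a) * qFact (r+a) / (qFact (r+1) * qFact a) := by
  have h1 : qInt (r+a+1) ≠ 0 := qInt_ne (by omega)
  rw [lam, if_neg (by omega),
    show 2*(r+1)+a - (r+1) = r+a+1 from by omega, qBinom,
    show r+a+1-(r+1) = a from by omega, qFact_succ (r+a)]
  field_simp [qFact_ne, h1]

lemma bracketC (t a : ℕ) :
    qInt (2*t+a+3) * qInt (t+2) * qInt (a+2)
      - q^(t+1) * (qInt (2*t+a+5) * qInt (t+a+2) * qInt (a+2)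
          - qInt (2*t+a+4) * qInt (a+1) * qInt (a+2))
      = (1 - q^(a+2)) * (qInt (2*t+a+4) * qInt (t+a+2) * qInt (t+2)) := by
  simp only [qInt_eq]
  field_simp [q_sub_one_ne]
  ring

lemma lam_dagger (r a : ℕ) :
    lam (2*r+a+1) r - q^r * (lam (2*r+a+3) (r+1) - lam (2*r+a+2) (r+1))
      = (1 - q^(a+2)) * lam (2*r+a+2) r := by
  rcases r with _ | t
  · have key : qInt (a+3) = qInt (a+2) + q^(a+2) := by
      have := qInt_add (a+2) 1
      rw [show a+2+1 = a+3 from by omega, qInt_one, mul_one] at this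
      exact this
    rw [show 2*0+a+1 = a+1 from by omega,
      show 2*0+a+3 = 2*(0+1)+(a+1) from by omega,
      show 2*0+a+2 = 2*(0+1)+a from by omega]
    simp only [lam_zero']
    rw [lam_eq 0 (a+1), lam_eq 0 a,
      show (0:ℕ)+(a+1) = a+1 from by omega, show (0:ℕ)+a = a from by omega,
      show (0:ℕ)+1 = 1 from rfl, qFact_one,
      show 2*(0+1)+(a+1) = a+3 from by omega,
      show 2*(0+1)+a = a+2 from by omega]
    rw [pow_zero, one_mul, mul_one]
    field_simp [qFact_ne]
    linear_combination -key
  · have e1 : lam (2*(t+1)+(a+1)) (t+1)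
        = qInt (2*t+a+3) * qInt (t+2) * qInt (a+2)
            * (qFact (t+a+1) / (qFact (t+2) * qFact (a+2))) := by
      rw [lam_eq t (a+1), show t+(a+1) = t+a+1 from by omega,
        show 2*(t+1)+(a+1) = 2*t+a+3 from by omega,
        qFact_succ (t+1), qFact_succ (a+1)]
      have h1 : qInt (t+2) ≠ 0 := qInt_ne (by omega)
      have h2 : qInt (a+2) ≠ 0 := qInt_ne (by omega)
      field_simp [qFact_ne, h1, h2]
    have e2 : lam (2*(t+2)+(a+1)) (t+2)
        = qInt (2*t+a+5) * qInt (t+a+2) * qInt (a+2)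
            * (qFact (t+a+1) / (qFact (t+2) * qFact (a+2))) := by
      rw [lam_eq (t+1) (a+1), show t+1+(a+1) = (t+a+1)+1 from by omega,
        show 2*(t+1+1)+(a+1) = 2*t+a+5 from by omega,
        qFact_succ (t+a+1), qFact_succ (a+1)]
      have h2 : qInt (a+2) ≠ 0 := qInt_ne (by omega)
      field_simp [qFact_ne, h2]
    have e3 : lam (2*(t+2)+a) (t+2)
        = qInt (2*t+a+4) * qInt (a+1) * qInt (a+2)
            * (qFact (t+a+1) / (qFact (t+2) * qFact (a+2))) := by
      rw [lam_eq (t+1) a, show t+1+a = t+a+1 from by omega,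
        show 2*(t+1+1)+a = 2*t+a+4 from by omega,
        show (a+2 : ℕ) = a+1+1 from rfl, qFact_succ (a+1), qFact_succ a]
      have h1 : qInt (a+1) ≠ 0 := qInt_ne (by omega)
      have h2 : qInt (a+2) ≠ 0 := qInt_ne (by omega)
      field_simp [qFact_ne, h1, h2]
    have e4 : lam (2*(t+1)+(a+2)) (t+1)
        = qInt (2*t+a+4) * qInt (t+a+2) * qInt (t+2)
            * (qFact (t+a+1) / (qFact (t+2) * qFact (a+2))) := by
      rw [lam_eq t (a+2), show t+(a+2) = (t+a+1)+1 from by omega,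
        show 2*(t+1)+(a+2) = 2*t+a+4 from by omega,
        qFact_succ (t+a+1), qFact_succ (t+1)]
      have h1 : qInt (t+2) ≠ 0 := qInt_ne (by omega)
      field_simp [qFact_ne, h1]
    rw [show 2*(t+1)+a+1 = 2*(t+1)+(a+1) from by omega, e1,
      show 2*(t+1)+a+3 = 2*(t+2)+(a+1) from by omega, e2,
      show 2*(t+1)+a+2 = 2*(t+2)+a from by omega, e3,
      show (2:ℕ)*(t+2)+a = 2*(t+1)+(a+2) from by omega, e4]
    linear_combination (qFact (t+a+1) / (qFact (t+2) * qFact (a+2))) * bracketC t a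

end QBinomLam

section Ddagger

lemma bracketD (t : ℕ) :
    q^(t+1) * (qInt (2*t+4) * qInt (t+1)) - qInt (2*t+2) * qInt (t+2)
      + (1-q) * (qInt (2*t+3) * (qInt (t+1) * qInt (t+2))) = 0 := by
  simp only [qInt_eq]
  field_simp [q_sub_one_ne]
  ring

lemma lam_ddagger (t : ℕ) :
    q^(t+1) * lam (2*(t+2)) (t+2) - lam (2*(t+1)) (t+1)
      + (1-q) * lam (2*(t+1)+1) (t+1) = 0 := by
  have h1 : qInt (t+1) ≠ 0 := qInt_ne (by omega)
  have h2 : qInt (t+2) ≠ 0 := qInt_ne (by omega)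
  have d1 : lam (2*(t+2)) (t+2)
      = qInt (2*t+4) * qInt (t+1) * (qInt (t+1) * qInt (t+2))⁻¹ := by
    rw [show 2*(t+2) = 2*(t+1+1)+0 from by omega, lam_eq (t+1) 0,
      show t+1+0 = t+1 from by omega, qFact_zero,
      show 2*(t+1+1)+0 = 2*t+4 from by omega, qFact_succ (t+1)]
    field_simp [qFact_ne]
  have d2 : lam (2*(t+1)) (t+1)
      = qInt (2*t+2) * qInt (t+2) * (qInt (t+1) * qInt (t+2))⁻¹ := by
    rw [show 2*(t+1) = 2*(t+1)+0 from by omega, lam_eq t 0,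
      show t+0 = t from by omega, qFact_zero,
      show 2*(t+1)+0 = 2*t+2 from by omega, qFact_succ t]
    field_simp [qFact_ne]
  have d3 : lam (2*(t+1)+1) (t+1)
      = qInt (2*t+3) * (qInt (t+1) * qInt (t+2)) * (qInt (t+1) * qInt (t+2))⁻¹ := by
    rw [lam_eq t 1, show t+1 = t+1 from rfl, qFact_one,
      show 2*(t+1)+1 = 2*t+3 from by omega]
    field_simp [qFact_ne]
  rw [d1, d2, d3]
  linear_combination (qInt (t+1) * qInt (t+2))⁻¹ * bracketD t

end Ddagger
section Wlemmas

lemma qInt_zero : qInt 0 = 0 := by simp [qInt]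

lemma W_zero (n : ℕ) : W n 0 = 1 := by
  simp [W, lam_zero']

lemma choose_sum_split (n L : ℕ) (T : ℕ → F) :
    ∑ i ∈ Finset.range (L+1), ((n+1).choose i : F) * T i
      = ∑ i ∈ Finset.range (L+1), (n.choose i : F) * T i
        + ∑ i ∈ Finset.range L, (n.choose i : F) * T (i+1) := by
  rw [Finset.sum_range_succ' (fun i => ((n+1).choose i : F) * T i) L]
  rw [Finset.sum_range_succ' (fun i => ((n).choose i : F) * T i) L]
  simp only [Nat.choose_succ_succ, Nat.cast_add, add_mul, Nat.choose_zero_right]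
  rw [Finset.sum_add_distrib]
  ring

lemma W_rec (ℓ a : ℕ) :
    W (2*ℓ+2+a+1) (ℓ+1) = W (2*ℓ+2+a) (ℓ+1) + qInt (a+2) * W (2*ℓ+2+a) ℓ := by
  rw [W, W, W]
  simp only [mul_assoc]
  rw [choose_sum_split (2*ℓ+2+a) (ℓ+1)
    (fun i => (-1:F)^(ℓ+1-i) * (q^((ℓ+1-i).choose 2) * lam (2*ℓ+2+a+1 - 2*i) (ℓ+1-i)))]
  have key : (∑ i ∈ Finset.range (ℓ+1+1), ((2*ℓ+2+a).choose i : F) *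
        ((-1:F)^(ℓ+1-i) * (q^((ℓ+1-i).choose 2) * lam (2*ℓ+2+a+1 - 2*i) (ℓ+1-i)))
      + ∑ i ∈ Finset.range (ℓ+1), ((2*ℓ+2+a).choose i : F) *
        ((-1:F)^(ℓ+1-(i+1)) * (q^((ℓ+1-(i+1)).choose 2) * lam (2*ℓ+2+a+1 - 2*(i+1)) (ℓ+1-(i+1)))))
      = (∑ i ∈ Finset.range (ℓ+1+1), ((2*ℓ+2+a).choose i : F) *
        ((-1:F)^(ℓ+1-i) * (q^((ℓ+1-i).choose 2) * lam (2*ℓ+2+a - 2*i) (ℓ+1-i))))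
      + (1 - q^(a+2)) * (∑ i ∈ Finset.range (ℓ+1), ((2*ℓ+2+a).choose i : F) *
        ((-1:F)^(ℓ-i) * (q^((ℓ-i).choose 2) * lam (2*ℓ+2+a - 2*i) (ℓ-i)))) := by
    rw [Finset.sum_range_succ (fun i => ((2*ℓ+2+a).choose i : F) *
        ((-1:F)^(ℓ+1-i) * (q^((ℓ+1-i).choose 2) * lam (2*ℓ+2+a+1 - 2*i) (ℓ+1-i)))) (ℓ+1)]
    rw [Finset.sum_range_succ (fun i => ((2*ℓ+2+a).choose i : F) *
        ((-1:F)^(ℓ+1-i) * (q^((ℓ+1-i).choose 2) * lam (2*ℓ+2+a - 2*i) (ℓ+1-i)))) (ℓ+1)]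
    rw [show ℓ+1-(ℓ+1) = 0 from by omega, show 2*ℓ+2+a+1 - 2*(ℓ+1) = a+1 from by omega,
      show 2*ℓ+2+a - 2*(ℓ+1) = a from by omega]
    rw [lam_zero', lam_zero', Finset.mul_sum]
    have main : ∑ i ∈ Finset.range (ℓ+1), (((2*ℓ+2+a).choose i : F) *
          ((-1:F)^(ℓ+1-i) * (q^((ℓ+1-i).choose 2) * lam (2*ℓ+2+a+1 - 2*i) (ℓ+1-i)))
        + ((2*ℓ+2+a).choose i : F) *
          ((-1:F)^(ℓ+1-(i+1)) * (q^((ℓ+1-(i+1)).choose 2) * lam (2*ℓ+2+a+1 - 2*(i+1)) (ℓ+1-(i+1)))))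
        = ∑ i ∈ Finset.range (ℓ+1), (((2*ℓ+2+a).choose i : F) *
          ((-1:F)^(ℓ+1-i) * (q^((ℓ+1-i).choose 2) * lam (2*ℓ+2+a - 2*i) (ℓ+1-i)))
        + (1 - q^(a+2)) * (((2*ℓ+2+a).choose i : F) *
          ((-1:F)^(ℓ-i) * (q^((ℓ-i).choose 2) * lam (2*ℓ+2+a - 2*i) (ℓ-i))))) := by
      apply Finset.sum_congr rfl
      intro i hi
      rw [Finset.mem_range] at hi
      obtain ⟨r, rfl⟩ : ∃ r, ℓ = i + r := ⟨ℓ - i, by omega⟩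
      rw [show i+r+1-i = r+1 from by omega, show i+r+1-(i+1) = r from by omega,
        show i+r-i = r from by omega,
        show 2*(i+r)+2+a+1 - 2*i = 2*r+a+3 from by omega,
        show 2*(i+r)+2+a+1 - 2*(i+1) = 2*r+a+1 from by omega,
        show 2*(i+r)+2+a - 2*i = 2*r+a+2 from by omega,
        show (r+1).choose 2 = r.choose 2 + r from by
          rw [Nat.choose_succ_succ, Nat.choose_one_right, Nat.add_comm]]
      linear_combination (((2*(i+r)+2+a).choose i : F) * (-1)^r * q^(r.choose 2)) * lam_dagger r a
    simp only [Finset.sum_add_distrib] at main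
    linear_combination main
  rw [key, mul_add]
  have c : (1-q)⁻¹ ^ (ℓ+1) * (1 - q^(a+2)) = qInt (a+2) * (1-q)⁻¹ ^ ℓ := by
    rw [← one_sub_q_mul_qInt (a+2), pow_succ]
    field_simp [one_sub_q_ne]
  linear_combination (∑ i ∈ Finset.range (ℓ+1), ((2*ℓ+2+a).choose i : F) *
        ((-1:F)^(ℓ-i) * (q^((ℓ-i).choose 2) * lam (2*ℓ+2+a - 2*i) (ℓ-i)))) * c

end Wlemmas
section Wboundary

lemma qInt_two : qInt 2 = 1 + q := by
  rw [qInt, Finset.sum_range_succ, Finset.sum_range_one, pow_zero, pow_one]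

lemma lam_two_one : lam 2 1 = 1 + q := by
  have := lam_eq 0 0
  rw [show 2*(0+1)+0 = 2 from by omega, show (0:ℕ)+0 = 0 from rfl, qFact_zero,
    show (0:ℕ)+1 = 1 from rfl, qFact_one] at this
  rw [this, qInt_two]
  norm_num

lemma W_bnd (t : ℕ) : W (2*t+1+1) (t+1) = W (2*t+1) t := by
  rw [W, W]
  simp only [mul_assoc]
  rw [choose_sum_split (2*t+1) (t+1)
    (fun i => (-1:F)^(t+1-i) * (q^((t+1-i).choose 2) * lam (2*t+1+1 - 2*i) (t+1-i)))]
  have hsymm : (((2*t+1).choose (t+1) : ℕ) : F) = (((2*t+1).choose t : ℕ) : F) := by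
    congr 1
    rw [← Nat.choose_symm (show t+1 ≤ 2*t+1 by omega), show 2*t+1-(t+1) = t from by omega]
  have key : (∑ i ∈ Finset.range (t+1+1), ((2*t+1).choose i : F) *
        ((-1:F)^(t+1-i) * (q^((t+1-i).choose 2) * lam (2*t+1+1 - 2*i) (t+1-i)))
      + ∑ i ∈ Finset.range (t+1), ((2*t+1).choose i : F) *
        ((-1:F)^(t+1-(i+1)) * (q^((t+1-(i+1)).choose 2) * lam (2*t+1+1 - 2*(i+1)) (t+1-(i+1)))))
      = (1-q) * ∑ i ∈ Finset.range (t+1), ((2*t+1).choose i : F) *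
        ((-1:F)^(t-i) * (q^((t-i).choose 2) * lam (2*t+1 - 2*i) (t-i))) := by
    rw [Finset.sum_range_succ (fun i => ((2*t+1).choose i : F) *
        ((-1:F)^(t+1-i) * (q^((t+1-i).choose 2) * lam (2*t+1+1 - 2*i) (t+1-i)))) (t+1)]
    rw [Finset.sum_range_succ (fun i => ((2*t+1).choose i : F) *
        ((-1:F)^(t+1-i) * (q^((t+1-i).choose 2) * lam (2*t+1+1 - 2*i) (t+1-i)))) t]
    rw [Finset.sum_range_succ (fun i => ((2*t+1).choose i : F) *
        ((-1:F)^(t+1-(i+1)) * (q^((t+1-(i+1)).choose 2) * lam (2*t+1+1 - 2*(i+1)) (t+1-(i+1))))) t]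
    rw [Finset.sum_range_succ (fun i => ((2*t+1).choose i : F) *
        ((-1:F)^(t-i) * (q^((t-i).choose 2) * lam (2*t+1 - 2*i) (t-i)))) t]
    rw [show t+1-(t+1) = 0 from by omega, show 2*t+1+1-2*(t+1) = 0 from by omega,
      show t+1-t = 1 from by omega, show 2*t+1+1-2*t = 2 from by omega,
      show t-t = 0 from by omega, show 2*t+1-2*t = 1 from by omega,
      show Nat.choose 0 2 = 0 from rfl, show Nat.choose 1 2 = 0 from rfl,
      lam_zero' 0, lam_zero' 1, lam_two_one]
    have main : ∑ i ∈ Finset.range t, (((2*t+1).choose i : F) *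
          ((-1:F)^(t+1-i) * (q^((t+1-i).choose 2) * lam (2*t+1+1 - 2*i) (t+1-i)))
        + ((2*t+1).choose i : F) *
          ((-1:F)^(t+1-(i+1)) * (q^((t+1-(i+1)).choose 2) * lam (2*t+1+1 - 2*(i+1)) (t+1-(i+1)))))
        = ∑ i ∈ Finset.range t, (1-q) * (((2*t+1).choose i : F) *
          ((-1:F)^(t-i) * (q^((t-i).choose 2) * lam (2*t+1 - 2*i) (t-i)))) := by
      apply Finset.sum_congr rfl
      intro i hi
      rw [Finset.mem_range] at hi
      obtain ⟨r, rfl⟩ : ∃ r, t = i + r + 1 := ⟨t - i - 1, by omega⟩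
      rw [show i+r+1+1-i = r+2 from by omega, show i+r+1+1-(i+1) = r+1 from by omega,
        show i+r+1-i = r+1 from by omega,
        show 2*(i+r+1)+1+1 - 2*i = 2*(r+2) from by omega,
        show 2*(i+r+1)+1+1 - 2*(i+1) = 2*(r+1) from by omega,
        show 2*(i+r+1)+1 - 2*i = 2*(r+1)+1 from by omega,
        show (r+2).choose 2 = (r+1).choose 2 + (r+1) from by
          rw [Nat.choose_succ_succ (r+1), Nat.choose_one_right, Nat.add_comm]]
      linear_combination (((2*(i+r+1)+1).choose i : F) * (-1)^r * q^((r+1).choose 2))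
        * lam_ddagger r
    simp only [Finset.sum_add_distrib] at main
    rw [mul_add (1-q), Finset.mul_sum]
    linear_combination main + hsymm
  rw [key]
  have c : (1-q)⁻¹ ^ (t+1) * (1-q) = (1-q)⁻¹ ^ t := by
    rw [pow_succ]
    field_simp [one_sub_q_ne]
  linear_combination (∑ i ∈ Finset.range (t+1), ((2*t+1).choose i : F) *
        ((-1:F)^(t-i) * (q^((t-i).choose 2) * lam (2*t+1 - 2*i) (t-i)))) * c

end Wboundary
set_option synthInstance.maxHeartbeats 1000000

section Operators

lemma end_ext {f g : Module.End F (Polynomial F)}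
    (h : ∀ n : ℕ, f (Polynomial.X ^ n) = g (Polynomial.X ^ n)) : f = g := by
  apply Polynomial.lhom_ext'
  intro n
  apply LinearMap.ext_ring
  simpa [← Polynomial.smul_X_eq_monomial] using h n

lemma Dq_one_eq : Dq (1 : Polynomial F) = 0 := by
  simp [Dq, divXL]

lemma Dq_X_pow (n : ℕ) : Dq (Polynomial.X ^ (n+1)) = qInt (n+1) • Polynomial.X ^ n := by
  rw [Dq]
  simp only [LinearMap.smul_apply, LinearMap.comp_apply, LinearMap.sub_apply,
    AlgHom.toLinearMap_apply, LinearMap.id_apply, map_pow, Polynomial.aeval_X]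
  have e1 : (Polynomial.C q * Polynomial.X)^(n+1) - Polynomial.X^(n+1)
      = Polynomial.C (q^(n+1) - 1) * Polynomial.X^(n+1) := by
    rw [mul_pow, ← Polynomial.C_pow, Polynomial.C_sub, Polynomial.C_1, sub_mul, one_mul]
  rw [e1]
  have e2 : divXL (Polynomial.C (q^(n+1) - 1) * Polynomial.X^(n+1))
      = Polynomial.C (q^(n+1) - 1) * Polynomial.X^n := by
    show Polynomial.divX _ = _
    rw [Polynomial.divX_C_mul, Polynomial.divX_X_pow]
    simp
  rw [e2, Polynomial.smul_eq_C_mul, Polynomial.smul_eq_C_mul, ← mul_assoc, ← Polynomial.C_mul]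
  rw [qInt_eq]
  ring_nf

lemma Xop_apply (p : Polynomial F) : Xop p = Polynomial.X * p := rfl

lemma Dq_Xop_comm : Dq * Xop = q • (Xop * Dq) + (1 : Module.End F (Polynomial F)) := by
  apply end_ext
  intro n
  have hx : ∀ m : ℕ, Xop (Polynomial.X ^ m) = Polynomial.X ^ (m+1) := by
    intro m; rw [Xop_apply, ← pow_succ']
  simp only [Module.End.mul_apply, LinearMap.add_apply, LinearMap.smul_apply,
    Module.End.one_apply, hx]
  cases n with
  | zero =>
    rw [pow_zero, Dq_one_eq, map_zero, Dq_X_pow, qInt_one, one_smul, pow_zero]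
    simp
  | succ m =>
    rw [Dq_X_pow (m+1), Dq_X_pow m, map_smul, hx m, smul_smul]
    have h2 : qInt (m+2) = 1 + q * qInt (m+1) := by
      have := qInt_add 1 (m+1)
      rw [qInt_one, pow_one, show 1+(m+1) = m+2 from by omega] at this
      exact this
    rw [h2, add_smul, one_smul, add_comm]

lemma Dq_mul_Xop_pow (a : ℕ) :
    Dq * Xop^(a+1) = (q^(a+1)) • (Xop^(a+1) * Dq) + qInt (a+1) • Xop^a := by
  induction a with
  | zero =>
    rw [pow_one, pow_one, pow_zero, qInt_one, one_smul, Dq_Xop_comm]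
  | succ a ih =>
    rw [pow_succ Xop (a+1), ← mul_assoc, ih, add_mul, smul_mul_assoc, smul_mul_assoc,
      mul_assoc, Dq_Xop_comm, mul_add, mul_one, mul_smul_comm, ← mul_assoc, ← pow_succ]
    have h2 : qInt (a+1+1) = qInt (a+1) + q^(a+1)*qInt 1 := qInt_add (a+1) 1
    rw [qInt_one, mul_one] at h2
    rw [h2, smul_add, smul_smul, ← pow_succ, add_smul]
    abel

lemma Dq_mul_XD (a b : ℕ) :
    Dq * (Xop^a * Dq^b) = q^a • (Xop^a * Dq^(b+1)) + qInt a • (Xop^(a-1) * Dq^b) := by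
  cases a with
  | zero =>
    rw [pow_zero, one_mul, qInt_zero, zero_smul, add_zero, pow_zero, one_smul, one_mul,
      ← pow_succ']
  | succ a =>
    rw [← mul_assoc, Dq_mul_Xop_pow a, add_mul, smul_mul_assoc, smul_mul_assoc,
      mul_assoc, ← pow_succ']
    rw [show a+1-1 = a from rfl]

lemma qBinom_zero_right (n : ℕ) : qBinom n 0 = 1 := by
  rw [qBinom, qFact_zero, Nat.sub_zero, one_mul, div_self (qFact_ne n)]

lemma qBinom_self (n : ℕ) : qBinom n n = 1 := by
  rw [qBinom, Nat.sub_self, qFact_zero, mul_one, div_self (qFact_ne n)]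

end Operators
noncomputable def Ek (k : ℕ) : Module.End F (Polynomial F) :=
  ∑ a ∈ Finset.range (k+1), (qBinom k a * s^(k-a)) • (Xop^a * Dq^(k-a))

section EkLemmas

lemma Ek_zero_eq : Ek 0 = 1 := by
  rw [Ek, Finset.sum_range_one, qBinom_zero_right]
  simp

lemma Ek_one_eq : Ek 1 = Xop + s • Dq := by
  rw [Ek, Finset.sum_range_succ, Finset.sum_range_one, qBinom_zero_right, qBinom_self]
  simp [add_comm]

lemma Ek_rec (k : ℕ) :
    (Xop + s • Dq) * Ek (k+1) = Ek (k+2) + (s * qInt (k+1)) • Ek k := by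
  have hA : Xop * Ek (k+1) = ∑ a ∈ Finset.range (k+2),
      (qBinom (k+1) a * s^(k+1-a)) • (Xop^(a+1) * Dq^(k+1-a)) := by
    rw [Ek, Finset.mul_sum]
    apply Finset.sum_congr rfl
    intro a _
    rw [mul_smul_comm, ← mul_assoc, ← pow_succ']
  have hB : (s • Dq) * Ek (k+1)
      = (∑ a ∈ Finset.range (k+2),
          (s * (qBinom (k+1) a * s^(k+1-a) * q^a)) • (Xop^a * Dq^(k+1-a+1)))
        + ∑ a ∈ Finset.range (k+2),
          (s * (qBinom (k+1) a * s^(k+1-a) * qInt a)) • (Xop^(a-1) * Dq^(k+1-a)) := by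
    rw [Ek, Finset.mul_sum, ← Finset.sum_add_distrib]
    apply Finset.sum_congr rfl
    intro a _
    rw [smul_mul_assoc, mul_smul_comm, Dq_mul_XD a (k+1-a)]
    simp only [smul_add, smul_smul]
  have hE : Ek (k+2)
      = ((∑ a ∈ Finset.range (k+1),
          ((qBinom (k+1) a * s^(k+1-a)) • (Xop^(a+1) * Dq^(k+1-a))
            + (s * (qBinom (k+1) (a+1) * s^(k+1-(a+1)) * q^(a+1)))
                • (Xop^(a+1) * Dq^(k+1-(a+1)+1))))
          + (qBinom (k+2) 0 * s^(k+2-0)) • (Xop^0 * Dq^(k+2-0)))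
        + (qBinom (k+2) (k+2) * s^(k+2-(k+2))) • (Xop^(k+2) * Dq^(k+2-(k+2))) := by
    rw [Ek, Finset.sum_range_succ
      (fun A => (qBinom (k+2) A * s^(k+2-A)) • (Xop^A * Dq^(k+2-A))) (k+2),
      Finset.sum_range_succ'
      (fun A => (qBinom (k+2) A * s^(k+2-A)) • (Xop^A * Dq^(k+2-A))) (k+1)]
    congr 2
    apply Finset.sum_congr rfl
    intro a ha
    rw [Finset.mem_range] at ha
    have hp := qBinom_pascal a (k-a)
    rw [show a+(k-a)+2 = k+2 from by omega, show a+(k-a)+1 = k+1 from by omega] at hp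
    rw [show k+2-(a+1) = (k-a)+1 from by omega, show k+1-(a+1)+1 = (k-a)+1 from by omega,
      show k+1-(a+1) = k-a from by omega, show k+1-a = (k-a)+1 from by omega, hp]
    rw [pow_succ s (k-a), ← add_smul]
    congr 1
    ring
  have hR : (s * qInt (k+1)) • Ek k = ∑ a ∈ Finset.range (k+1),
      (s * (qBinom (k+1) (a+1) * s^(k+1-(a+1)) * qInt (a+1)))
        • (Xop^(a+1-1) * Dq^(k+1-(a+1))) := by
    rw [Ek, Finset.smul_sum]
    apply Finset.sum_congr rfl
    intro a ha
    rw [Finset.mem_range] at ha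
    have habs := qBinom_absorb a (k-a)
    rw [show a+(k-a)+1 = k+1 from by omega, show a+(k-a) = k from by omega] at habs
    rw [show a+1-1 = a from rfl, show k+1-(a+1) = k-a from by omega, smul_smul]
    congr 1
    linear_combination (-(s * s^(k-a))) * habs
  rw [add_mul, hA, hB, hE, hR]
  rw [Finset.sum_range_succ
    (fun a => (qBinom (k+1) a * s^(k+1-a)) • (Xop^(a+1) * Dq^(k+1-a))) (k+1)]
  rw [Finset.sum_range_succ'
    (fun a => (s * (qBinom (k+1) a * s^(k+1-a) * q^a)) • (Xop^a * Dq^(k+1-a+1))) (k+1)]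
  rw [Finset.sum_range_succ'
    (fun a => (s * (qBinom (k+1) a * s^(k+1-a) * qInt a)) • (Xop^(a-1) * Dq^(k+1-a))) (k+1)]
  rw [Finset.sum_add_distrib]
  have hz : (s * (qBinom (k+1) 0 * s^(k+1-0) * qInt 0))
      • (Xop^((0:ℕ)-1) * Dq^(k+1-0)) = 0 := by
    rw [qInt_zero, mul_zero, mul_zero, zero_smul]
  rw [hz]
  have hf0 : (s * (qBinom (k+1) 0 * s^(k+1-0) * q^0)) • (Xop^(0:ℕ) * Dq^(k+1-0+1))
      = (qBinom (k+2) 0 * s^(k+2-0)) • (Xop^(0:ℕ) * Dq^(k+2-0)) := by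
    rw [qBinom_zero_right, qBinom_zero_right, pow_zero, Nat.sub_zero, Nat.sub_zero,
      show k+1+1 = k+2 from rfl, pow_succ' s (k+1)]
    congr 1
    ring
  have htop : (qBinom (k+1) (k+1) * s^(k+1-(k+1))) • (Xop^(k+1+1) * Dq^(k+1-(k+1)))
      = (qBinom (k+2) (k+2) * s^(k+2-(k+2))) • (Xop^(k+2) * Dq^(k+2-(k+2))) := by
    rw [qBinom_self, qBinom_self, Nat.sub_self, Nat.sub_self]
  rw [hf0, htop]
  abel

end EkLemmas
section MainInduction

lemma step_all (m : ℕ) :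
    (Xop + s • Dq) * Ek m = Ek (m+1) + (s * qInt m) • Ek (m-1) := by
  cases m with
  | zero =>
    rw [Ek_zero_eq, mul_one, qInt_zero, mul_zero, zero_smul, add_zero, Ek_one_eq]
  | succ m => exact Ek_rec m

lemma step_term (ℓ c : ℕ) :
    (W (2*ℓ+2+c) (ℓ+1) * s^(ℓ+1)) • Ek (c+1)
      + ((W (2*ℓ+2+c) ℓ * s^ℓ) * (s * qInt (c+2))) • Ek (c+1)
      = (W (2*ℓ+2+c+1) (ℓ+1) * s^(ℓ+1)) • Ek (c+1) := by
  rw [W_rec ℓ c, ← add_smul]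
  congr 1
  ring

lemma main_pow (n : ℕ) :
    (Xop + s • Dq)^n = ∑ ℓ ∈ Finset.range (n/2+1), (W n ℓ * s^ℓ) • Ek (n - 2*ℓ) := by
  induction n with
  | zero =>
    rw [pow_zero, Finset.sum_range_one, W_zero]
    rw [show (0:ℕ) - 2*0 = 0 from rfl, Ek_zero_eq]
    simp
  | succ n ih =>
    rw [pow_succ' (Xop + s • Dq) n, ih, Finset.mul_sum]
    have hstep : ∀ ℓ, (Xop + s • Dq) * ((W n ℓ * s^ℓ) • Ek (n - 2*ℓ))
        = (W n ℓ * s^ℓ) • Ek (n - 2*ℓ + 1)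
          + ((W n ℓ * s^ℓ) * (s * qInt (n - 2*ℓ))) • Ek (n - 2*ℓ - 1) := by
      intro ℓ
      rw [mul_smul_comm, step_all (n - 2*ℓ), smul_add, smul_smul]
    simp only [hstep]
    rw [Finset.sum_add_distrib]
    rcases Nat.even_or_odd n with ⟨u, rfl⟩ | ⟨u, rfl⟩
    · -- n = u + u
      rw [show (u+u)/2 = u from by omega, show (u+u+1)/2 = u from by omega]
      rw [Finset.sum_range_succ
        (fun ℓ => ((W (u+u) ℓ * s^ℓ) * (s * qInt (u+u - 2*ℓ))) • Ek (u+u - 2*ℓ - 1)) u]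
      rw [show u+u - 2*u = 0 from by omega, qInt_zero, mul_zero, mul_zero, zero_smul,
        add_zero]
      rw [Finset.sum_range_succ'
        (fun ℓ => (W (u+u) ℓ * s^ℓ) • Ek (u+u - 2*ℓ + 1)) u]
      rw [Finset.sum_range_succ'
        (fun ℓ => (W (u+u+1) ℓ * s^ℓ) • Ek (u+u+1 - 2*ℓ)) u]
      have h0 : (W (u+u) 0 * s^(0:ℕ)) • Ek (u+u - 2*0 + 1)
          = (W (u+u+1) 0 * s^(0:ℕ)) • Ek (u+u+1 - 2*0) := by
        rw [W_zero, W_zero, show u+u - 2*0 + 1 = u+u+1 - 2*0 from by omega]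
      have main : ∑ ℓ ∈ Finset.range u,
          ((W (u+u) (ℓ+1) * s^(ℓ+1)) • Ek (u+u - 2*(ℓ+1) + 1)
            + ((W (u+u) ℓ * s^ℓ) * (s * qInt (u+u - 2*ℓ))) • Ek (u+u - 2*ℓ - 1))
          = ∑ ℓ ∈ Finset.range u, (W (u+u+1) (ℓ+1) * s^(ℓ+1)) • Ek (u+u+1 - 2*(ℓ+1)) := by
        apply Finset.sum_congr rfl
        intro ℓ hℓ
        rw [Finset.mem_range] at hℓ
        obtain ⟨r, rfl⟩ : ∃ r, u = ℓ + r + 1 := ⟨u - ℓ - 1, by omega⟩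
        rw [show (ℓ+r+1)+(ℓ+r+1) - 2*(ℓ+1) + 1 = 2*r+1 from by omega,
          show (ℓ+r+1)+(ℓ+r+1) - 2*ℓ - 1 = 2*r+1 from by omega,
          show (ℓ+r+1)+(ℓ+r+1)+1 - 2*(ℓ+1) = 2*r+1 from by omega,
          show (ℓ+r+1)+(ℓ+r+1) - 2*ℓ = 2*r+2 from by omega]
        rw [show (ℓ+r+1)+(ℓ+r+1) = 2*ℓ+2+2*r from by omega]
        exact step_term ℓ (2*r)
      rw [Finset.sum_add_distrib] at main
      rw [h0]
      rw [← main]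
      abel
    · -- n = 2u+1
      rw [show (2*u+1)/2 = u from by omega, show (2*u+1+1)/2 = u+1 from by omega]
      rw [Finset.sum_range_succ
        (fun ℓ => ((W (2*u+1) ℓ * s^ℓ) * (s * qInt (2*u+1 - 2*ℓ))) • Ek (2*u+1 - 2*ℓ - 1)) u]
      rw [Finset.sum_range_succ'
        (fun ℓ => (W (2*u+1) ℓ * s^ℓ) • Ek (2*u+1 - 2*ℓ + 1)) u]
      rw [Finset.sum_range_succ
        (fun ℓ => (W (2*u+1+1) ℓ * s^ℓ) • Ek (2*u+1+1 - 2*ℓ)) (u+1)]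
      rw [Finset.sum_range_succ'
        (fun ℓ => (W (2*u+1+1) ℓ * s^ℓ) • Ek (2*u+1+1 - 2*ℓ)) u]
      have h0 : (W (2*u+1) 0 * s^(0:ℕ)) • Ek (2*u+1 - 2*0 + 1)
          = (W (2*u+1+1) 0 * s^(0:ℕ)) • Ek (2*u+1+1 - 2*0) := by
        rw [W_zero, W_zero, show 2*u+1 - 2*0 + 1 = 2*u+1+1 - 2*0 from by omega]
      have htop : ((W (2*u+1) u * s^u) * (s * qInt (2*u+1 - 2*u))) • Ek (2*u+1 - 2*u - 1)
          = (W (2*u+1+1) (u+1) * s^(u+1)) • Ek (2*u+1+1 - 2*(u+1)) := by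
        rw [show 2*u+1 - 2*u = 1 from by omega, qInt_one,
          show (1:ℕ) - 1 = 0 from rfl,
          show 2*u+1+1 - 2*(u+1) = 0 from by omega, W_bnd u]
        congr 1
        ring
      have main : ∑ ℓ ∈ Finset.range u,
          ((W (2*u+1) (ℓ+1) * s^(ℓ+1)) • Ek (2*u+1 - 2*(ℓ+1) + 1)
            + ((W (2*u+1) ℓ * s^ℓ) * (s * qInt (2*u+1 - 2*ℓ))) • Ek (2*u+1 - 2*ℓ - 1))
          = ∑ ℓ ∈ Finset.range u, (W (2*u+1+1) (ℓ+1) * s^(ℓ+1)) • Ek (2*u+1+1 - 2*(ℓ+1)) := by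
        apply Finset.sum_congr rfl
        intro ℓ hℓ
        rw [Finset.mem_range] at hℓ
        obtain ⟨r, rfl⟩ : ∃ r, u = ℓ + r + 1 := ⟨u - ℓ - 1, by omega⟩
        rw [show 2*(ℓ+r+1)+1 - 2*(ℓ+1) + 1 = 2*r+2 from by omega,
          show 2*(ℓ+r+1)+1 - 2*ℓ - 1 = 2*r+2 from by omega,
          show 2*(ℓ+r+1)+1+1 - 2*(ℓ+1) = 2*r+2 from by omega,
          show 2*(ℓ+r+1)+1 - 2*ℓ = 2*r+3 from by omega]
        rw [show 2*(ℓ+r+1)+1 = 2*ℓ+2+(2*r+1) from by omega]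
        exact step_term ℓ (2*r+1)
      rw [Finset.sum_add_distrib] at main
      rw [h0, htop]
      rw [← main]
      abel

end MainInduction
section Reindex

lemma reindex (n : ℕ) :
    ∑ m ∈ Finset.range (n+1), ∑ ℓ ∈ Finset.range (min m (n-m) + 1),
        (qBinom (n - 2*ℓ) (m-ℓ) * W n ℓ * s^(n-m)) • (Xop^(m-ℓ) * Dq^(n-m-ℓ))
      = ∑ ℓ ∈ Finset.range (n/2+1), (W n ℓ * s^ℓ) • Ek (n - 2*ℓ) := by
  simp only [Ek, Finset.smul_sum, smul_smul]
  rw [Finset.sum_sigma' (Finset.range (n+1))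
    (fun m => Finset.range (min m (n-m) + 1))
    (fun m ℓ => (qBinom (n - 2*ℓ) (m-ℓ) * W n ℓ * s^(n-m)) • (Xop^(m-ℓ) * Dq^(n-m-ℓ)))]
  rw [Finset.sum_sigma' (Finset.range (n/2+1))
    (fun ℓ => Finset.range (n - 2*ℓ + 1))
    (fun ℓ a => (W n ℓ * s^ℓ * (qBinom (n - 2*ℓ) a * s^(n - 2*ℓ - a)))
      • (Xop^a * Dq^(n - 2*ℓ - a)))]
  apply Finset.sum_nbij' (fun p => ⟨p.2, p.1 - p.2⟩) (fun p => ⟨p.2 + p.1, p.1⟩)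
  · intro p hp
    simp only [Finset.mem_sigma, Finset.mem_range] at hp ⊢
    omega
  · intro p hp
    simp only [Finset.mem_sigma, Finset.mem_range] at hp ⊢
    omega
  · intro p hp
    simp only [Finset.mem_sigma, Finset.mem_range] at hp
    simp only [Sigma.ext_iff]
    constructor
    · omega
    · simp only [heq_eq_eq]
  · intro p hp
    simp only [Finset.mem_sigma, Finset.mem_range] at hp
    simp only [Sigma.ext_iff]
    constructor
    · trivial
    · simp only [heq_eq_eq]
      omega
  · intro p hp
    obtain ⟨m, ℓ⟩ := p
    simp only [Finset.mem_sigma, Finset.mem_range] at hp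
    have hm : ℓ ≤ m ∧ m + ℓ ≤ n ∧ m ≤ n := by
      constructor
      · omega
      constructor
      · rcases hp with ⟨h1, h2⟩
        have := Nat.lt_succ_iff.mp h2
        have := le_min_iff.mp this
        omega
      · omega
    have hs : s^(n-m) = s^ℓ * s^(n-m-ℓ) := by
      rw [← pow_add]
      congr 1
      omega
    show (qBinom (n - 2*ℓ) (m-ℓ) * W n ℓ * s^(n-m)) • (Xop^(m-ℓ) * Dq^(n-m-ℓ))
      = (W n ℓ * s^ℓ * (qBinom (n - 2*ℓ) (m-ℓ) * s^(n - 2*ℓ - (m-ℓ))))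
          • (Xop^(m-ℓ) * Dq^(n - 2*ℓ - (m-ℓ)))
    rw [show n - 2*ℓ - (m-ℓ) = n-m-ℓ from by omega, hs]
    congr 1
    ring

end Reindex

/- STATEMENT 17: normal ordering
(X + s D_q)^n = Σ_{m=0}^{n} Σ_{ℓ=0}^{min(m,n-m)} [n-2ℓ choose m-ℓ]_q W(n,ℓ)
X^{m-ℓ} s^{n-m} D_q^{n-m-ℓ}. -/
theorem qWeyl_normal_ordering (n : ℕ) :
    (Xop + s • Dq) ^ n =
      ∑ m ∈ Finset.range (n + 1), ∑ ℓ ∈ Finset.range (min m (n - m) + 1),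
        (qBinom (n - 2 * ℓ) (m - ℓ) * W n ℓ * s ^ (n - m)) •
          (Xop ^ (m - ℓ) * Dq ^ (n - m - ℓ)) := by
  rw [main_pow n]
  exact (reindex n).symm

end
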